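/- Converse realizability of the roots: for any real numbers e₁, e₂, e₃ with −1 ≤ e₁ ≤ e₂ ≤ 1 ≤ e₃, there exist real numbers l, n, h such that P(u) = (u − e₁)(u − e₂)(u − e₃) for all real u; i.e. the inequality −1 ≤ e₁ ≤ e₂ ≤ 1 ≤ e₃ is the only constraint on the roots. -/

import Mathlib

/-- Converse realizability of the roots: any `e₁, e₂, e₃` with `-1 ≤ e₁ ≤ e₂ ≤ 1 ≤ e₃` arise
as the roots of the cubic polynomial for suitable values of the first integrals `l, n, h`. -/
theorem toyTop_roots_realizable
    (A C p : ℝ) (hA : 0 < A) (hC : 0 < C) (hp : 0 < p)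
    (e₁ e₂ e₃ : ℝ) (h₁ : -1 ≤ e₁) (h₂ : e₁ ≤ e₂) (h₃ : e₂ ≤ 1) (h₄ : 1 ≤ e₃) :
    ∃ l n h : ℝ, ∀ u : ℝ,
      1 / p * (1 - u ^ 2) * (h - n ^ 2 / (2 * C) - p * u)
          - 1 / (2 * A * p) * (l - n * u) ^ 2
        = (u - e₁) * (u - e₂) * (u - e₃) := by
  have he₂ : -1 ≤ e₂ := h₁.trans h₂
  have hr₁ : (0:ℝ) ≤ 2 * A * p * ((1 - e₁) * (1 - e₂) * (e₃ - 1)) :=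
    mul_nonneg (by positivity)
      (mul_nonneg (mul_nonneg (by linarith [h₂.trans h₃]) (by linarith)) (by linarith))
  have hr₂ : (0:ℝ) ≤ 2 * A * p * ((1 + e₁) * (1 + e₂) * (1 + e₃)) :=
    mul_nonneg (by positivity)
      (mul_nonneg (mul_nonneg (by linarith) (by linarith)) (by linarith))
  set a := Real.sqrt (2 * A * p * ((1 - e₁) * (1 - e₂) * (e₃ - 1))) with ha
  set b := Real.sqrt (2 * A * p * ((1 + e₁) * (1 + e₂) * (1 + e₃))) with hb
  have ha2 : a ^ 2 = 2 * A * p * ((1 - e₁) * (1 - e₂) * (e₃ - 1)) := Real.sq_sqrt hr₁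
  have hb2 : b ^ 2 = 2 * A * p * ((1 + e₁) * (1 + e₂) * (1 + e₃)) := Real.sq_sqrt hr₂
  refine ⟨(a + b) / 2, (b - a) / 2,
    ((b - a) / 2) ^ 2 / (2 * C) + p * (e₁ + e₂ + e₃) - ((b - a) / 2) ^ 2 / (2 * A), fun u => ?_⟩
  have hA' : (A:ℝ) ≠ 0 := hA.ne'
  have hC' : (C:ℝ) ≠ 0 := hC.ne'
  have hp' : (p:ℝ) ≠ 0 := hp.ne'
  field_simp
  linear_combination (-(u + 1) * 2 * C) * ha2 + ((u - 1) * 2 * C) * hb2
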